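/- Legendre's singular modulus for N = 3: with k := sin(π/12) = ½√(2 − √3) and k' := √(1 − k²) = cos(π/12), one has K(k')/K(k) = √3, where K(k) := ∫₀^{π/2} dθ/√(1 − k² sin²θ). -/

import Mathlib

set_option maxHeartbeats 1000000

open Real

noncomputable def lsmW (x : ℝ) : ℝ :=
  x * (2 * Real.sqrt 3 + (2 - Real.sqrt 3) * x ^ 2) / (2 + Real.sqrt 3 * x ^ 2)

noncomputable def lsmD (x : ℝ) : ℝ :=
  ((2 * Real.sqrt 3 + 3 * (2 - Real.sqrt 3) * x ^ 2) * (2 + Real.sqrt 3 * x ^ 2)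
    - (x * (2 * Real.sqrt 3 + (2 - Real.sqrt 3) * x ^ 2)) * (2 * Real.sqrt 3 * x))
  / (2 + Real.sqrt 3 * x ^ 2) ^ 2

lemma lsm_r3 : Real.sqrt 3 ^ 2 = 3 := Real.sq_sqrt (by norm_num)

lemma lsm_rlb : (1.7 : ℝ) < Real.sqrt 3 := by
  nlinarith [lsm_r3, Real.sqrt_nonneg 3]

lemma lsm_rub : Real.sqrt 3 < 1.8 := by
  nlinarith [lsm_r3, Real.sqrt_nonneg 3]

lemma lsm_den_pos (x : ℝ) : 0 < 2 + Real.sqrt 3 * x ^ 2 := by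
  have := Real.sqrt_nonneg 3
  nlinarith [sq_nonneg x]

lemma lsmW_nonneg {x : ℝ} (hx : 0 ≤ x) : 0 ≤ lsmW x := by
  have h := lsm_rub
  apply div_nonneg _ (lsm_den_pos x).le
  have : (0:ℝ) ≤ 2 - Real.sqrt 3 := by linarith
  positivity

lemma lsmW_lt_one {x : ℝ} (hx0 : 0 ≤ x) (hx1 : x < 1) : lsmW x < 1 := by
  rw [lsmW, div_lt_one (lsm_den_pos x)]
  set r := Real.sqrt 3 with hr
  have hr3 : r ^ 2 = 3 := lsm_r3
  have h1 : (1.7:ℝ) < r := lsm_rlb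
  have h2 : r < 1.8 := lsm_rub
  have key : (2 - r) * ((2 + r * x ^ 2) - x * (2 * r + (2 - r) * x ^ 2))
      = (1 - x) * ((2 - r) * x - (r - 1)) ^ 2 := by
    linear_combination (x - 1) * hr3
  have hneg : (2 - r) * x - (r - 1) < 0 := by nlinarith
  nlinarith [mul_pos (sub_pos.2 hx1) (mul_pos_of_neg_of_neg hneg hneg)]

lemma lsmW_one : lsmW 1 = 1 := by
  rw [lsmW, div_eq_one_iff_eq (lsm_den_pos 1).ne']
  ring

lemma lsmW_zero : lsmW 0 = 0 := by
  rw [lsmW]; norm_num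

lemma lsm_hasDerivAt (x : ℝ) : HasDerivAt lsmW (lsmD x) x := by
  set r := Real.sqrt 3 with hr
  have hwe : lsmW = fun y => (2 * r * y + (2 - r) * y ^ 3) / (2 + r * y ^ 2) := by
    funext y; rw [lsmW]; ring
  have hA : HasDerivAt (fun y : ℝ => 2 * r * y + (2 - r) * y ^ 3)
      (2 * r + (2 - r) * (3 * x ^ 2)) x := by
    have h1 := (hasDerivAt_id x).const_mul (2 * r)
    have h2 := (hasDerivAt_pow 3 x).const_mul (2 - r)
    have := h1.add h2
    exact this.congr_deriv (by push_cast; ring)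
  have hB : HasDerivAt (fun y : ℝ => 2 + r * y ^ 2) (r * (2 * x)) x := by
    have h2 := ((hasDerivAt_pow 2 x).const_mul r).const_add 2
    exact h2.congr_deriv (by push_cast; ring)
  have := hA.div hB (lsm_den_pos x).ne'
  rw [hwe]
  exact this.congr_deriv (by rw [lsmD]; ring)

lemma lsm_T_pos {x : ℝ} (hx0 : 0 ≤ x) (hx1 : x ≤ 1) :
    0 < (2 * Real.sqrt 3 + 3 * (2 - Real.sqrt 3) * x ^ 2) * (2 + Real.sqrt 3 * x ^ 2)
      - (x * (2 * Real.sqrt 3 + (2 - Real.sqrt 3) * x ^ 2)) * (2 * Real.sqrt 3 * x) := by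
  set r := Real.sqrt 3 with hr
  have hr3 : r ^ 2 = 3 := lsm_r3
  have h1 : (1.7:ℝ) < r := lsm_rlb
  have h2 : r < 1.8 := lsm_rub
  have hT : (2 * r + 3 * (2 - r) * x ^ 2) * (2 + r * x ^ 2)
      - (x * (2 * r + (2 - r) * x ^ 2)) * (2 * r * x)
      = 4 * r + (6 - 6 * r) * x ^ 2 + (2 * r - 3) * x ^ 4 := by
    linear_combination (-2 * x ^ 2 - x ^ 4) * hr3
  rw [hT]
  have hx2 : x ^ 2 ≤ 1 := by nlinarith
  have hx4 : x ^ 4 ≤ x ^ 2 := by nlinarith [sq_nonneg x, sq_nonneg (x ^ 2)]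
  nlinarith [sq_nonneg x, sq_nonneg (x ^ 2)]

lemma lsmD_pos {x : ℝ} (hx0 : 0 ≤ x) (hx1 : x ≤ 1) : 0 < lsmD x := by
  rw [lsmD]
  exact div_pos (lsm_T_pos hx0 hx1) (by positivity)

lemma lsm_key {s : ℝ} (hs0 : 0 ≤ s) (hs1 : s < 1) :
    lsmD s * Real.sqrt (1 - s ^ 2) * Real.sqrt (1 - (2 - Real.sqrt 3) / 4 * s ^ 2)
      = Real.sqrt 3 * (Real.sqrt (1 - lsmW s ^ 2)
          * Real.sqrt (1 - (2 + Real.sqrt 3) / 4 * lsmW s ^ 2)) := by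
  set r := Real.sqrt 3 with hr
  have hr3 : r ^ 2 = 3 := lsm_r3
  have h1 : (1.7:ℝ) < r := lsm_rlb
  have h2 : r < 1.8 := lsm_rub
  have hD := lsm_den_pos s
  have hDne : (2 + r * s ^ 2) ≠ 0 := hD.ne'
  have hW0 : 0 ≤ lsmW s := lsmW_nonneg hs0
  have hW1 : lsmW s < 1 := lsmW_lt_one hs0 hs1
  have hDpos : 0 < lsmD s := lsmD_pos hs0 hs1.le
  have hA : (0:ℝ) ≤ 1 - s ^ 2 := by nlinarith
  have hB : (0:ℝ) ≤ 1 - (2 - r) / 4 * s ^ 2 := by nlinarith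
  have hC : (0:ℝ) ≤ 1 - lsmW s ^ 2 := by nlinarith
  have hE : (0:ℝ) ≤ 1 - (2 + r) / 4 * lsmW s ^ 2 := by nlinarith
  -- the polynomial identity (with denominators)
  have hw2 : lsmW s ^ 2 = (s * (2 * r + (2 - r) * s ^ 2)) ^ 2 / (2 + r * s ^ 2) ^ 2 := by
    rw [lsmW, div_pow]
  have hint : (s * (2 * r + (2 - r) * s ^ 2)) ^ 2 / (2 + r * s ^ 2) ^ 2 * (2 + r * s ^ 2) ^ 2
      = (s * (2 * r + (2 - r) * s ^ 2)) ^ 2 := div_mul_cancel₀ _ (pow_ne_zero 2 hDne)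
  have hC' : (1 - lsmW s ^ 2)
      = ((2 + r * s ^ 2) ^ 2 - (s * (2 * r + (2 - r) * s ^ 2)) ^ 2) / (2 + r * s ^ 2) ^ 2 := by
    rw [hw2, eq_div_iff (pow_ne_zero 2 hDne)]
    linear_combination (-1 : ℝ) * hint
  have hE' : (1 - (2 + r) / 4 * lsmW s ^ 2)
      = ((2 + r * s ^ 2) ^ 2 - (2 + r) / 4 * (s * (2 * r + (2 - r) * s ^ 2)) ^ 2)
        / (2 + r * s ^ 2) ^ 2 := by
    rw [hw2, eq_div_iff (pow_ne_zero 2 hDne)]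
    linear_combination (-(2 + r) / 4) * hint
  have hpoly : ((2 * r + 3 * (2 - r) * s ^ 2) * (2 + r * s ^ 2)
        - (s * (2 * r + (2 - r) * s ^ 2)) * (2 * r * s)) ^ 2
        * ((1 - s ^ 2) * (1 - (2 - r) / 4 * s ^ 2))
      = 3 * (((2 + r * s ^ 2) ^ 2 - (s * (2 * r + (2 - r) * s ^ 2)) ^ 2)
          * ((2 + r * s ^ 2) ^ 2 - (2 + r) / 4 * (s * (2 * r + (2 - r) * s ^ 2)) ^ 2)) := by
    linear_combination (16 - 48*s^4 + 48*s^6 - 24*s^8 + 8*s^12 + 48*r*s^4 - 96*r*s^6 + 36*r*s^8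
      + 24*r*s^10 - 12*r*s^12 - 12*r^2*s^4 + 12*r^2*s^6 + 18*r^2*s^8 - 24*r^2*s^10 + 6*r^2*s^12
      - 12*r^3*s^4 + 28*r^3*s^6 - 21*r^3*s^8 + 6*r^3*s^10 - r^3*s^12) * hr3
  have hkey : lsmD s ^ 2 * ((1 - s ^ 2) * (1 - (2 - r) / 4 * s ^ 2))
      = 3 * ((1 - lsmW s ^ 2) * (1 - (2 + r) / 4 * lsmW s ^ 2)) := by
    rw [hC', hE', lsmD]
    rw [div_pow, div_mul_div_comm, div_mul_eq_mul_div]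
    rw [hpoly]
    ring
  -- now pass to square roots
  have e1 : lsmD s * Real.sqrt (1 - s ^ 2) * Real.sqrt (1 - (2 - r) / 4 * s ^ 2)
      = Real.sqrt (lsmD s ^ 2 * ((1 - s ^ 2) * (1 - (2 - r) / 4 * s ^ 2))) := by
    rw [Real.sqrt_mul (sq_nonneg _), Real.sqrt_mul hA, Real.sqrt_sq hDpos.le]
    ring
  have e2 : r * (Real.sqrt (1 - lsmW s ^ 2) * Real.sqrt (1 - (2 + r) / 4 * lsmW s ^ 2))
      = Real.sqrt (3 * ((1 - lsmW s ^ 2) * (1 - (2 + r) / 4 * lsmW s ^ 2))) := by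
    rw [Real.sqrt_mul (by norm_num : (0:ℝ) ≤ 3), Real.sqrt_mul hC, hr]
  rw [e1, e2, hkey]

theorem legendre_singular_modulus :
    (∫ θ in (0:ℝ)..(π/2),
        1 / Real.sqrt (1 - (Real.sqrt (1 - (Real.sin (π/12))^2))^2 * Real.sin θ ^ 2))
      / (∫ θ in (0:ℝ)..(π/2),
        1 / Real.sqrt (1 - (Real.sin (π/12))^2 * Real.sin θ ^ 2))
      = Real.sqrt 3 := by
  have hr3 : Real.sqrt 3 ^ 2 = 3 := lsm_r3
  have h1r : (1.7:ℝ) < Real.sqrt 3 := lsm_rlb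
  have h2r : Real.sqrt 3 < 1.8 := lsm_rub
  have hpi := Real.pi_pos
  -- reduce the moduli to explicit numbers
  have hsin2 : Real.sin (π/12) ^ 2 = (2 - Real.sqrt 3) / 4 := by
    have hc6 : Real.cos (π/6) = Real.sqrt 3 / 2 := Real.cos_pi_div_six
    have hdb : Real.cos (2 * (π/12)) = 2 * Real.cos (π/12) ^ 2 - 1 := Real.cos_two_mul _
    have hpy : Real.sin (π/12) ^ 2 + Real.cos (π/12) ^ 2 = 1 := Real.sin_sq_add_cos_sq _
    have h612 : 2 * (π/12) = π/6 := by ring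
    rw [h612, hc6] at hdb
    linarith
  have hsinsq_le : Real.sin (π/12) ^ 2 ≤ 1 := Real.sin_sq_le_one _
  have hcossq : (Real.sqrt (1 - (Real.sin (π/12))^2))^2 = (2 + Real.sqrt 3) / 4 := by
    rw [Real.sq_sqrt (by linarith), hsin2]; ring
  rw [hcossq, hsin2]
  set f : ℝ → ℝ := fun θ => 1 / Real.sqrt (1 - (2 + Real.sqrt 3) / 4 * Real.sin θ ^ 2) with hf
  set g : ℝ → ℝ := fun θ => 1 / Real.sqrt (1 - (2 - Real.sqrt 3) / 4 * Real.sin θ ^ 2) with hg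
  have hfden : ∀ θ : ℝ, 0 < 1 - (2 + Real.sqrt 3) / 4 * Real.sin θ ^ 2 := by
    intro θ; nlinarith [Real.sin_sq_le_one θ, sq_nonneg (Real.sin θ)]
  have hgden : ∀ θ : ℝ, 0 < 1 - (2 - Real.sqrt 3) / 4 * Real.sin θ ^ 2 := by
    intro θ; nlinarith [Real.sin_sq_le_one θ, sq_nonneg (Real.sin θ)]
  have hfc : Continuous f := by
    apply continuous_const.div
    · exact Real.continuous_sqrt.comp
        (continuous_const.sub (continuous_const.mul (Real.continuous_sin.pow 2)))
    · intro θ; exact (Real.sqrt_pos.2 (hfden θ)).ne'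
  have hgc : Continuous g := by
    apply continuous_const.div
    · exact Real.continuous_sqrt.comp
        (continuous_const.sub (continuous_const.mul (Real.continuous_sin.pow 2)))
    · intro θ; exact (Real.sqrt_pos.2 (hgden θ)).ne'
  have hI2pos : 0 < ∫ θ in (0:ℝ)..(π/2), g θ := by
    apply intervalIntegral.intervalIntegral_pos_of_pos (hgc.intervalIntegrable 0 (π/2))
    · intro x; exact div_pos one_pos (Real.sqrt_pos.2 (hgden x))
    · linarith
  -- continuity of lsmW
  have hwc : Continuous lsmW := by
    apply Continuous.div
    · exact continuous_id.mul (continuous_const.add (continuous_const.mul (continuous_pow 2)))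
    · exact continuous_const.add (continuous_const.mul (continuous_pow 2))
    · intro x; exact (lsm_den_pos x).ne'
  set φ : ℝ → ℝ := fun θ => Real.arcsin (lsmW (Real.sin θ)) with hφ
  set φ' : ℝ → ℝ := fun θ =>
    1 / Real.sqrt (1 - lsmW (Real.sin θ) ^ 2) * (lsmD (Real.sin θ) * Real.cos θ) with hφ'
  have hmain : (∫ θ in (0:ℝ)..(π/2), f θ) = Real.sqrt 3 * ∫ θ in (0:ℝ)..(π/2), g θ := by
    have hstep : ∀ d ∈ Set.Ico (0:ℝ) (π/2),
        (∫ x in (0:ℝ)..(φ d), f x) = Real.sqrt 3 * ∫ x in (0:ℝ)..d, g x := by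
      intro d hd
      have hIcc : Set.uIcc (0:ℝ) d = Set.Icc 0 d := Set.uIcc_of_le hd.1
      have hfacts : ∀ θ ∈ Set.Icc (0:ℝ) d,
          0 ≤ Real.sin θ ∧ Real.sin θ < 1 ∧ 0 < Real.cos θ := by
        intro θ hθ
        obtain ⟨hθ0, hθd⟩ := hθ
        have hθ2 : θ < π/2 := lt_of_le_of_lt hθd hd.2
        have hcos : 0 < Real.cos θ :=
          Real.cos_pos_of_mem_Ioo ⟨by linarith, hθ2⟩
        have hsin0 : 0 ≤ Real.sin θ :=
          Real.sin_nonneg_of_nonneg_of_le_pi hθ0 (by linarith)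
        have hpy : Real.sin θ ^ 2 + Real.cos θ ^ 2 = 1 := Real.sin_sq_add_cos_sq θ
        refine ⟨hsin0, ?_, hcos⟩
        nlinarith
      have hderiv : ∀ θ ∈ Set.uIcc (0:ℝ) d, HasDerivAt φ (φ' θ) θ := by
        intro θ hθ
        rw [hIcc] at hθ
        obtain ⟨hs0, hs1, _⟩ := hfacts θ hθ
        have hW0 : 0 ≤ lsmW (Real.sin θ) := lsmW_nonneg hs0
        have hW1 : lsmW (Real.sin θ) < 1 := lsmW_lt_one hs0 hs1
        have h1 : HasDerivAt Real.sin (Real.cos θ) θ := Real.hasDerivAt_sin θ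
        have h2 := (lsm_hasDerivAt (Real.sin θ)).comp θ h1
        have h3 := Real.hasDerivAt_arcsin (x := lsmW (Real.sin θ))
          (by linarith) (ne_of_lt hW1)
        have h4 := h3.comp θ h2
        exact h4
      have hcontφ' : ContinuousOn φ' (Set.uIcc (0:ℝ) d) := by
        rw [hIcc]
        apply ContinuousOn.mul
        · apply ContinuousOn.div continuousOn_const
          · exact (Real.continuous_sqrt.comp
              (continuous_const.sub ((hwc.comp Real.continuous_sin).pow 2))).continuousOn
          · intro θ hθ
            obtain ⟨hs0, hs1, _⟩ := hfacts θ hθ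
            have hW0 : 0 ≤ lsmW (Real.sin θ) := lsmW_nonneg hs0
            have hW1 : lsmW (Real.sin θ) < 1 := lsmW_lt_one hs0 hs1
            exact (Real.sqrt_pos.2 (by nlinarith)).ne'
        · apply Continuous.continuousOn
          apply Continuous.mul _ Real.continuous_cos
          have hDc : Continuous lsmD := by
            apply Continuous.div
            · fun_prop
            · fun_prop
            · intro x; exact (pow_ne_zero 2 (lsm_den_pos x).ne')
          exact hDc.comp Real.continuous_sin
      have hsub := intervalIntegral.integral_comp_smul_deriv hderiv hcontφ' hfc
      have hφ0 : φ 0 = 0 := by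
        rw [hφ]; simp [lsmW_zero]
      rw [hφ0] at hsub
      rw [← hsub, ← intervalIntegral.integral_const_mul]
      apply intervalIntegral.integral_congr
      intro θ hθ
      rw [hIcc] at hθ
      obtain ⟨hs0, hs1, hcos⟩ := hfacts θ hθ
      have hW0 : 0 ≤ lsmW (Real.sin θ) := lsmW_nonneg hs0
      have hW1 : lsmW (Real.sin θ) < 1 := lsmW_lt_one hs0 hs1
      have hsa : Real.sin (Real.arcsin (lsmW (Real.sin θ))) = lsmW (Real.sin θ) :=
        Real.sin_arcsin (by linarith) hW1.le
      have hcossqrt : Real.cos θ = Real.sqrt (1 - Real.sin θ ^ 2) := by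
        rw [← Real.sin_sq_add_cos_sq θ]
        rw [show Real.sin θ ^ 2 + Real.cos θ ^ 2 - Real.sin θ ^ 2 = Real.cos θ ^ 2 by ring]
        exact (Real.sqrt_sq hcos.le).symm
      have key := lsm_key hs0 hs1
      have hA' : 0 < Real.sqrt (1 - Real.sin θ ^ 2) := by rw [← hcossqrt]; exact hcos
      have hB' : 0 < Real.sqrt (1 - (2 - Real.sqrt 3) / 4 * Real.sin θ ^ 2) :=
        Real.sqrt_pos.2 (hgden θ)
      have hC' : 0 < Real.sqrt (1 - lsmW (Real.sin θ) ^ 2) :=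
        Real.sqrt_pos.2 (by nlinarith)
      have hE' : 0 < Real.sqrt (1 - (2 + Real.sqrt 3) / 4 * lsmW (Real.sin θ) ^ 2) := by
        apply Real.sqrt_pos.2
        nlinarith
      show φ' θ • (f ∘ φ) θ = Real.sqrt 3 * g θ
      rw [smul_eq_mul]
      show (1 / Real.sqrt (1 - lsmW (Real.sin θ) ^ 2) * (lsmD (Real.sin θ) * Real.cos θ))
          * (1 / Real.sqrt (1 - (2 + Real.sqrt 3) / 4
              * Real.sin (Real.arcsin (lsmW (Real.sin θ))) ^ 2))
        = Real.sqrt 3 * (1 / Real.sqrt (1 - (2 - Real.sqrt 3) / 4 * Real.sin θ ^ 2))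
      rw [hsa, hcossqrt]
      have e3 : (1 / Real.sqrt (1 - lsmW (Real.sin θ) ^ 2)
            * (lsmD (Real.sin θ) * Real.sqrt (1 - Real.sin θ ^ 2)))
          * (1 / Real.sqrt (1 - (2 + Real.sqrt 3) / 4 * lsmW (Real.sin θ) ^ 2))
          = (lsmD (Real.sin θ) * Real.sqrt (1 - Real.sin θ ^ 2))
            / (Real.sqrt (1 - lsmW (Real.sin θ) ^ 2)
              * Real.sqrt (1 - (2 + Real.sqrt 3) / 4 * lsmW (Real.sin θ) ^ 2)) := by
        ring
      have e4 : Real.sqrt 3 * (1 / Real.sqrt (1 - (2 - Real.sqrt 3) / 4 * Real.sin θ ^ 2))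
          = Real.sqrt 3 / Real.sqrt (1 - (2 - Real.sqrt 3) / 4 * Real.sin θ ^ 2) := by
        ring
      rw [e3, e4, div_eq_div_iff (mul_pos hC' hE').ne' hB'.ne']
      linear_combination key
    -- take limits d → π/2⁻
    have hcontF : Continuous fun y => ∫ x in (0:ℝ)..y, f x :=
      intervalIntegral.continuous_primitive (fun a b => hfc.intervalIntegrable a b) 0
    have hcontG : Continuous fun y => ∫ x in (0:ℝ)..y, g x :=
      intervalIntegral.continuous_primitive (fun a b => hgc.intervalIntegrable a b) 0
    have hφc : Continuous φ :=
      Real.continuous_arcsin.comp (hwc.comp Real.continuous_sin)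
    have hφtop : φ (π/2) = π/2 := by
      rw [hφ]
      simp only [Real.sin_pi_div_two, lsmW_one, Real.arcsin_one]
    have ht1 : Filter.Tendsto (fun d => ∫ x in (0:ℝ)..(φ d), f x)
        (nhdsWithin (π/2) (Set.Iio (π/2))) (nhds (∫ x in (0:ℝ)..(π/2), f x)) := by
      have h := (hcontF.comp hφc).tendsto (π/2)
      rw [Function.comp_apply, hφtop] at h
      exact h.mono_left nhdsWithin_le_nhds
    have ht2 : Filter.Tendsto (fun d => Real.sqrt 3 * ∫ x in (0:ℝ)..d, g x)
        (nhdsWithin (π/2) (Set.Iio (π/2)))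
        (nhds (Real.sqrt 3 * ∫ x in (0:ℝ)..(π/2), g x)) :=
      (((hcontG.tendsto (π/2)).const_mul _)).mono_left nhdsWithin_le_nhds
    have heq : (fun d => ∫ x in (0:ℝ)..(φ d), f x)
        =ᶠ[nhdsWithin (π/2) (Set.Iio (π/2))] fun d => Real.sqrt 3 * ∫ x in (0:ℝ)..d, g x := by
      filter_upwards [Ioo_mem_nhdsLT_of_mem (show (π/2:ℝ) ∈ Set.Ioc 0 (π/2) from ⟨by linarith, le_rfl⟩)]
        with d hd
      exact hstep d ⟨hd.1.le, hd.2⟩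
    exact tendsto_nhds_unique (ht1.congr' heq) ht2
  rw [hmain, mul_div_assoc, div_self hI2pos.ne', mul_one]
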